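/- Let 𝓛 be a summable symmetric monoidal category, with strength φ¹_{X₁,X₂} ∈ 𝓛(S(X₁)⊗X₂, S(X₁⊗X₂)) (characterized by π_i∘φ¹ = π_i⊗id) and φ²_{X₁,X₂} = S(sym)∘φ¹_{X₂,X₁}∘sym ∈ 𝓛(X₁⊗S(X₂), S(X₁⊗X₂)). Then: (1) φ¹∘(ι₀⊗id_{X₂}) = ι₀_{X₁⊗X₂}; (2) τ_{X₁⊗X₂}∘S(φ¹_{X₁,X₂})∘φ¹_{S X₁,X₂} = φ¹_{X₁,X₂}∘(τ_{X₁}⊗id_{X₂}); (3) c_{X₁⊗X₂}∘S(φ²_{X₁,X₂})∘φ¹_{X₁,S X₂} = S(φ¹_{X₁,X₂})∘φ²_{S X₁,X₂}, where c is the flip on S² and τ the monad multiplication. Consequently (S, ι₀, τ) equipped with φ¹ is a commutative strong monad: τ∘S(φ¹)∘φ²_{S X₁,X₂} = τ∘S(φ²)∘φ¹_{X₁,S X₂}. -/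

import Mathlib

open CategoryTheory Limits MonoidalCategory

universe v u

/-- A pre-summability structure on a category with zero morphisms: a functor `S`
together with jointly monic natural transformations `π₀, π₁ : S ⟶ 𝟭 C` and a
natural transformation `σ : S ⟶ 𝟭 C`. -/
structure PreSummability (C : Type u) [Category.{v} C] [HasZeroMorphisms C] where
  S : C ⥤ C
  π0 : S ⟶ 𝟭 C
  π1 : S ⟶ 𝟭 C
  σ : S ⟶ 𝟭 C
  jointly_monic : ∀ {Y X : C} (f g : Y ⟶ S.obj X),
    f ≫ π0.app X = g ≫ π0.app X → f ≫ π1.app X = g ≫ π1.app X → f = g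

namespace PreSummability

variable {C : Type u} [Category.{v} C] [HasZeroMorphisms C] (P : PreSummability C)

/-- Two morphisms are summable when they admit a (necessarily unique) witness. -/
def Summable {Y X : C} (f₀ f₁ : Y ⟶ X) : Prop :=
  ∃ h : Y ⟶ P.S.obj X, h ≫ P.π0.app X = f₀ ∧ h ≫ P.π1.app X = f₁

/-- The witness `⟨f₀, f₁⟩` of a summable pair (an arbitrary value if the pair is
not summable). -/
noncomputable def witness {Y X : C} (f₀ f₁ : Y ⟶ X) : Y ⟶ P.S.obj X :=
  @dite _ (P.Summable f₀ f₁) (Classical.propDecidable _) (fun h => h.choose) (fun _ => 0)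

/-- The sum `f₀ + f₁ = σ ∘ ⟨f₀, f₁⟩` of a summable pair. -/
noncomputable def sum {Y X : C} (f₀ f₁ : Y ⟶ X) : Y ⟶ X :=
  P.witness f₀ f₁ ≫ P.σ.app X

/-- Projections indexed by a boolean. -/
def pr (i : Bool) : P.S ⟶ 𝟭 C := if i then P.π1 else P.π0

/-- Axiom (S-com): `π₁` and `π₀` are summable with `π₁ + π₀ = σ`. -/
def SCom : Prop := ∀ X : C,
  P.Summable (P.π1.app X) (P.π0.app X) ∧ P.sum (P.π1.app X) (P.π0.app X) = P.σ.app X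

/-- Axiom (S-zero): `0` and `id` are summable with `0 + id = id`. -/
def SZero : Prop := ∀ X : C,
  P.Summable (0 : X ⟶ X) (𝟙 X) ∧ P.sum (0 : X ⟶ X) (𝟙 X) = 𝟙 X

/-- Axiom (S-wit): if `σ∘f₀` and `σ∘f₁` are summable then `f₀` and `f₁` are summable. -/
def SWit : Prop := ∀ (X Y : C) (f₀ f₁ : X ⟶ P.S.obj Y),
  P.Summable (f₀ ≫ P.σ.app Y) (f₁ ≫ P.σ.app Y) → P.Summable f₀ f₁

end PreSummability

section Monoidal

variable {C : Type u} [Category.{v} C] [HasZeroMorphisms C] [MonoidalCategory C]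

/-- The tensor product of zero morphisms is zero. -/
def TensorZero (C : Type u) [Category.{v} C] [HasZeroMorphisms C]
    [MonoidalCategory C] : Prop :=
  ∀ {X Y U V : C} (f : U ⟶ V),
    ((0 : X ⟶ Y) ⊗ₘ f) = 0 ∧ (f ⊗ₘ (0 : X ⟶ Y)) = 0

/-- Axiom (S-⊗): if `f₀` and `f₁` are summable then so are `f₀ ⊗ₘ g` and `f₁ ⊗ₘ g`,
with `(f₀ + f₁) ⊗ₘ g = f₀ ⊗ₘ g + f₁ ⊗ₘ g`. -/
def PreSummability.STens (P : PreSummability C) : Prop :=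
  ∀ {X Y U V : C} (f₀ f₁ : X ⟶ Y) (g : U ⟶ V), P.Summable f₀ f₁ →
    P.Summable (f₀ ⊗ₘ g) (f₁ ⊗ₘ g) ∧ (P.sum f₀ f₁ ⊗ₘ g) = P.sum (f₀ ⊗ₘ g) (f₁ ⊗ₘ g)

end Monoidal

namespace PreSummability

variable {C : Type u} [Category.{v} C] [HasZeroMorphisms C] (P : PreSummability C)

theorem nat0 {X X' : C} (f : X ⟶ X') :
    P.S.map f ≫ P.π0.app X' = P.π0.app X ≫ f := by simpa using P.π0.naturality f

theorem nat1 {X X' : C} (f : X ⟶ X') :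
    P.S.map f ≫ P.π1.app X' = P.π1.app X ≫ f := by simpa using P.π1.naturality f

theorem natσ {X X' : C} (f : X ⟶ X') :
    P.S.map f ≫ P.σ.app X' = P.σ.app X ≫ f := by simpa using P.σ.naturality f

theorem natpr (i : Bool) {X X' : C} (f : X ⟶ X') :
    P.S.map f ≫ (P.pr i).app X' = (P.pr i).app X ≫ f := by
  simpa using (P.pr i).naturality f

theorem witness_spec {Y X : C} {f₀ f₁ : Y ⟶ X} (h : P.Summable f₀ f₁) :
    P.witness f₀ f₁ ≫ P.π0.app X = f₀ ∧ P.witness f₀ f₁ ≫ P.π1.app X = f₁ := by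
  rw [PreSummability.witness, dif_pos h]
  exact ⟨h.choose_spec.1, h.choose_spec.2⟩

theorem witness_eq {Y X : C} {f₀ f₁ : Y ⟶ X} (h : Y ⟶ P.S.obj X)
    (h0 : h ≫ P.π0.app X = f₀) (h1 : h ≫ P.π1.app X = f₁) : P.witness f₀ f₁ = h := by
  have hs : P.Summable f₀ f₁ := ⟨h, h0, h1⟩
  exact P.jointly_monic _ _ ((P.witness_spec hs).1.trans h0.symm)
    ((P.witness_spec hs).2.trans h1.symm)

theorem sum_eq {Y X : C} {f₀ f₁ : Y ⟶ X} (h : Y ⟶ P.S.obj X)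
    (h0 : h ≫ P.π0.app X = f₀) (h1 : h ≫ P.π1.app X = f₁) :
    P.sum f₀ f₁ = h ≫ P.σ.app X := by
  rw [PreSummability.sum, P.witness_eq h h0 h1]

theorem sum_pre {Y' Y X : C} (g : Y' ⟶ Y) {f₀ f₁ : Y ⟶ X} (h : P.Summable f₀ f₁) :
    P.Summable (g ≫ f₀) (g ≫ f₁) ∧ P.sum (g ≫ f₀) (g ≫ f₁) = g ≫ P.sum f₀ f₁ := by
  obtain ⟨hw0, hw1⟩ := P.witness_spec h
  refine ⟨⟨g ≫ P.witness f₀ f₁, by rw [Category.assoc, hw0], by rw [Category.assoc, hw1]⟩, ?_⟩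
  rw [P.sum_eq (g ≫ P.witness f₀ f₁) (by rw [Category.assoc, hw0]) (by rw [Category.assoc, hw1]),
    PreSummability.sum, Category.assoc]

theorem sum_post {Y X X' : C} (k : X ⟶ X') {f₀ f₁ : Y ⟶ X} (h : P.Summable f₀ f₁) :
    P.Summable (f₀ ≫ k) (f₁ ≫ k) ∧ P.sum (f₀ ≫ k) (f₁ ≫ k) = P.sum f₀ f₁ ≫ k := by
  obtain ⟨hw0, hw1⟩ := P.witness_spec h
  have e0 : (P.witness f₀ f₁ ≫ P.S.map k) ≫ P.π0.app X' = f₀ ≫ k := by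
    rw [Category.assoc, P.nat0 k, ← Category.assoc, hw0]
  have e1 : (P.witness f₀ f₁ ≫ P.S.map k) ≫ P.π1.app X' = f₁ ≫ k := by
    rw [Category.assoc, P.nat1 k, ← Category.assoc, hw1]
  refine ⟨⟨_, e0, e1⟩, ?_⟩
  rw [P.sum_eq _ e0 e1, PreSummability.sum, Category.assoc, P.natσ k,
    ← Category.assoc]

/-- The flip morphism `⟨π₁, π₀⟩` on `S X`. -/
noncomputable def wflip (X : C) : P.S.obj X ⟶ P.S.obj X :=
  P.witness (P.π1.app X) (P.π0.app X)

theorem wflip_π0 (hcom : P.SCom) (X : C) : P.wflip X ≫ P.π0.app X = P.π1.app X :=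
  (P.witness_spec (hcom X).1).1

theorem wflip_π1 (hcom : P.SCom) (X : C) : P.wflip X ≫ P.π1.app X = P.π0.app X :=
  (P.witness_spec (hcom X).1).2

theorem wflip_σ (hcom : P.SCom) (X : C) : P.wflip X ≫ P.σ.app X = P.σ.app X := by
  have := (hcom X).2
  rw [PreSummability.sum] at this
  exact this

theorem summable_comm (hcom : P.SCom) {Y X : C} {u v : Y ⟶ X} (h : P.Summable u v) :
    P.Summable v u ∧ P.sum v u = P.sum u v := by
  obtain ⟨hw0, hw1⟩ := P.witness_spec h
  have e0 : (P.witness u v ≫ P.wflip X) ≫ P.π0.app X = v := by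
    rw [Category.assoc, P.wflip_π0 hcom, hw1]
  have e1 : (P.witness u v ≫ P.wflip X) ≫ P.π1.app X = u := by
    rw [Category.assoc, P.wflip_π1 hcom, hw0]
  refine ⟨⟨_, e0, e1⟩, ?_⟩
  rw [P.sum_eq _ e0 e1, PreSummability.sum, Category.assoc, P.wflip_σ hcom]

/-- The antidiagonal pair `(π₁π₀, π₀π₁)` is summable. -/
theorem antidiag (hcom : P.SCom) (hwit : P.SWit) (X : C) :
    P.Summable (P.π1.app (P.S.obj X) ≫ P.π0.app X) (P.π0.app (P.S.obj X) ≫ P.π1.app X) := by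
  have hσsum : P.Summable ((P.π0.app (P.S.obj X) ≫ P.wflip X) ≫ P.σ.app X)
      (P.π1.app (P.S.obj X) ≫ P.σ.app X) := by
    refine ⟨P.S.map (P.σ.app X), ?_, ?_⟩
    · rw [P.nat0 (P.σ.app X), Category.assoc, P.wflip_σ hcom]
    · rw [P.nat1 (P.σ.app X)]
  obtain ⟨H, H0, H1⟩ := hwit _ _ _ _ hσsum
  -- `H ≫ S(π₀)` witnesses `(π₀π₁, π₁π₀)`
  have e0 : (H ≫ P.S.map (P.π0.app X)) ≫ P.π0.app X = P.π0.app (P.S.obj X) ≫ P.π1.app X := by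
    rw [Category.assoc, P.nat0 (X' := X) (P.π0.app X), ← Category.assoc, H0,
      Category.assoc, P.wflip_π0 hcom]
  have e1 : (H ≫ P.S.map (P.π0.app X)) ≫ P.π1.app X = P.π1.app (P.S.obj X) ≫ P.π0.app X := by
    rw [Category.assoc, P.nat1 (X' := X) (P.π0.app X), ← Category.assoc, H1]
  exact (P.summable_comm hcom ⟨_, e0, e1⟩).1

end PreSummability


open PreSummability

set_option maxHeartbeats 1000000 in
theorem stmt17 {C : Type u} [Category.{v} C] [HasZeroMorphisms C]
    [MonoidalCategory C] [SymmetricCategory C] (htz : TensorZero C)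
    (P : PreSummability C) (hcom : P.SCom) (hzero : P.SZero) (hwit : P.SWit)
    (htens : P.STens)
    -- the unit `ι₀ = ⟨id, 0⟩`
    (ι : ∀ X : C, X ⟶ P.S.obj X)
    (hι0 : ∀ X : C, ι X ≫ P.π0.app X = 𝟙 X)
    (hι1 : ∀ X : C, ι X ≫ P.π1.app X = 0)
    -- the monad multiplication `τ`
    (τ : ∀ X : C, P.S.obj (P.S.obj X) ⟶ P.S.obj X)
    (hτ0 : ∀ X : C, τ X ≫ P.π0.app X = P.π0.app (P.S.obj X) ≫ P.π0.app X)
    (hτ1 : ∀ X : C, τ X ≫ P.π1.app X =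
      P.sum (P.π1.app (P.S.obj X) ≫ P.π0.app X) (P.π0.app (P.S.obj X) ≫ P.π1.app X))
    -- the flip `c` on `S²`
    (c : ∀ X : C, P.S.obj (P.S.obj X) ⟶ P.S.obj (P.S.obj X))
    (hc : ∀ (X : C) (i j : Bool),
      c X ≫ (P.pr j).app (P.S.obj X) ≫ (P.pr i).app X =
        (P.pr i).app (P.S.obj X) ≫ (P.pr j).app X)
    -- the strength `φ¹`, characterized by `π_i ∘ φ¹ = π_i ⊗ id`
    (φ : ∀ X₁ X₂ : C, P.S.obj X₁ ⊗ X₂ ⟶ P.S.obj (X₁ ⊗ X₂))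
    (hφ : ∀ (X₁ X₂ : C) (i : Bool),
      φ X₁ X₂ ≫ (P.pr i).app (X₁ ⊗ X₂) = ((P.pr i).app X₁ ⊗ₘ 𝟙 X₂))
    -- the strength `φ² = S(sym) ∘ φ¹ ∘ sym`
    (φ₂ : ∀ X₁ X₂ : C, X₁ ⊗ P.S.obj X₂ ⟶ P.S.obj (X₁ ⊗ X₂))
    (hφ₂ : ∀ X₁ X₂ : C,
      φ₂ X₁ X₂ = (β_ X₁ (P.S.obj X₂)).hom ≫ φ X₂ X₁ ≫ P.S.map (β_ X₂ X₁).hom) :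
    -- (1) compatibility with the unit
    (∀ X₁ X₂ : C, ((ι X₁ ⊗ₘ 𝟙 X₂) ≫ φ X₁ X₂) = ι (X₁ ⊗ X₂)) ∧
    -- (2) compatibility with the multiplication
    (∀ X₁ X₂ : C,
      φ (P.S.obj X₁) X₂ ≫ P.S.map (φ X₁ X₂) ≫ τ (X₁ ⊗ X₂) =
        ((τ X₁ ⊗ₘ 𝟙 X₂) ≫ φ X₁ X₂)) ∧
    -- (3) compatibility of the two strengths via the flip
    (∀ X₁ X₂ : C,
      φ X₁ (P.S.obj X₂) ≫ P.S.map (φ₂ X₁ X₂) ≫ c (X₁ ⊗ X₂) =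
        φ₂ (P.S.obj X₁) X₂ ≫ P.S.map (φ X₁ X₂)) ∧
    -- consequently, `(S, ι₀, τ)` is a commutative strong monad
    (∀ X₁ X₂ : C,
      φ₂ (P.S.obj X₁) X₂ ≫ P.S.map (φ X₁ X₂) ≫ τ (X₁ ⊗ X₂) =
        φ X₁ (P.S.obj X₂) ≫ P.S.map (φ₂ X₁ X₂) ≫ τ (X₁ ⊗ X₂)) := by
    -- specialize the boolean-indexed hypotheses
  have prf : P.pr false = P.π0 := rfl
  have prt : P.pr true = P.π1 := rfl
  have hφ0 : ∀ A B : C, φ A B ≫ P.π0.app (A ⊗ B) = (P.π0.app A ⊗ₘ 𝟙 B) := by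
    intro A B; have := hφ A B false; rwa [prf] at this
  have hφ1 : ∀ A B : C, φ A B ≫ P.π1.app (A ⊗ B) = (P.π1.app A ⊗ₘ 𝟙 B) := by
    intro A B; have := hφ A B true; rwa [prt] at this
  have hc00 : ∀ X : C, c X ≫ P.π0.app (P.S.obj X) ≫ P.π0.app X =
      P.π0.app (P.S.obj X) ≫ P.π0.app X := by
    intro X; have := hc X false false; rwa [prf] at this
  have hc01 : ∀ X : C, c X ≫ P.π1.app (P.S.obj X) ≫ P.π0.app X =
      P.π0.app (P.S.obj X) ≫ P.π1.app X := by
    intro X; have := hc X false true; rwa [prf, prt] at this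
  have hc10 : ∀ X : C, c X ≫ P.π0.app (P.S.obj X) ≫ P.π1.app X =
      P.π1.app (P.S.obj X) ≫ P.π0.app X := by
    intro X; have := hc X true false; rwa [prf, prt] at this
  have hc11 : ∀ X : C, c X ≫ P.π1.app (P.S.obj X) ≫ P.π1.app X =
      P.π1.app (P.S.obj X) ≫ P.π1.app X := by
    intro X; have := hc X true true; rwa [prt] at this
  -- components of φ₂
  have hφ₂0 : ∀ A B : C, φ₂ A B ≫ P.π0.app (A ⊗ B) = (𝟙 A ⊗ₘ P.π0.app B) := by
    intro A B
    rw [hφ₂, Category.assoc, Category.assoc, P.nat0 ((β_ B A).hom),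
      ← Category.assoc (φ B A), hφ0 B A, ← Category.assoc,
      ← BraidedCategory.braiding_naturality (𝟙 A) (P.π0.app B), Category.assoc]
    simp only [Functor.id_obj]
    rw [SymmetricCategory.symmetry, Category.comp_id]
  have hφ₂1 : ∀ A B : C, φ₂ A B ≫ P.π1.app (A ⊗ B) = (𝟙 A ⊗ₘ P.π1.app B) := by
    intro A B
    rw [hφ₂, Category.assoc, Category.assoc, P.nat1 ((β_ B A).hom),
      ← Category.assoc (φ B A), hφ1 B A, ← Category.assoc,
      ← BraidedCategory.braiding_naturality (𝟙 A) (P.π1.app B), Category.assoc]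
    simp only [Functor.id_obj]
    rw [SymmetricCategory.symmetry, Category.comp_id]
  -- (1)
  have part1 : ∀ X₁ X₂ : C, ((ι X₁ ⊗ₘ 𝟙 X₂) ≫ φ X₁ X₂) = ι (X₁ ⊗ X₂) := by
    intro X₁ X₂
    apply P.jointly_monic
    · rw [Category.assoc, hφ0, hι0, ← comp_tensor_id, hι0, id_tensorHom_id]
    · rw [Category.assoc, hφ1, ← comp_tensor_id, hι1, hι1, (htz (𝟙 X₂)).1]
  -- (2)
  have part2 : ∀ X₁ X₂ : C,
      φ (P.S.obj X₁) X₂ ≫ P.S.map (φ X₁ X₂) ≫ τ (X₁ ⊗ X₂) =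
        ((τ X₁ ⊗ₘ 𝟙 X₂) ≫ φ X₁ X₂) := by
    intro X₁ X₂
    have key0 : (φ (P.S.obj X₁) X₂ ≫ P.S.map (φ X₁ X₂)) ≫ P.π0.app (P.S.obj (X₁ ⊗ X₂)) =
        (P.π0.app (P.S.obj X₁) ⊗ₘ 𝟙 X₂) ≫ φ X₁ X₂ := by
      rw [Category.assoc, P.nat0 (φ X₁ X₂), ← Category.assoc, hφ0]
    have key1 : (φ (P.S.obj X₁) X₂ ≫ P.S.map (φ X₁ X₂)) ≫ P.π1.app (P.S.obj (X₁ ⊗ X₂)) =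
        (P.π1.app (P.S.obj X₁) ⊗ₘ 𝟙 X₂) ≫ φ X₁ X₂ := by
      rw [Category.assoc, P.nat1 (φ X₁ X₂), ← Category.assoc, hφ1]
    apply P.jointly_monic
    · calc (φ (P.S.obj X₁) X₂ ≫ P.S.map (φ X₁ X₂) ≫ τ (X₁ ⊗ X₂)) ≫ P.π0.app (X₁ ⊗ X₂)
          = (φ (P.S.obj X₁) X₂ ≫ P.S.map (φ X₁ X₂)) ≫ τ (X₁ ⊗ X₂) ≫ P.π0.app (X₁ ⊗ X₂) := by
            simp only [Category.assoc]
        _ = ((φ (P.S.obj X₁) X₂ ≫ P.S.map (φ X₁ X₂)) ≫ P.π0.app (P.S.obj (X₁ ⊗ X₂))) ≫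
              P.π0.app (X₁ ⊗ X₂) := by rw [hτ0, ← Category.assoc]
        _ = ((P.π0.app (P.S.obj X₁) ⊗ₘ 𝟙 X₂) ≫ φ X₁ X₂) ≫ P.π0.app (X₁ ⊗ X₂) := by rw [key0]
        _ = (P.π0.app (P.S.obj X₁) ⊗ₘ 𝟙 X₂) ≫ (P.π0.app X₁ ⊗ₘ 𝟙 X₂) := by
            rw [Category.assoc, hφ0]
        _ = ((P.π0.app (P.S.obj X₁) ≫ P.π0.app X₁) ⊗ₘ 𝟙 X₂) := by
            rw [← comp_tensor_id]
        _ = ((τ X₁ ≫ P.π0.app X₁) ⊗ₘ 𝟙 X₂) := by rw [hτ0]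
        _ = (τ X₁ ⊗ₘ 𝟙 X₂) ≫ (P.π0.app X₁ ⊗ₘ 𝟙 X₂) := by rw [comp_tensor_id]
        _ = ((τ X₁ ⊗ₘ 𝟙 X₂) ≫ φ X₁ X₂) ≫ P.π0.app (X₁ ⊗ X₂) := by rw [Category.assoc, hφ0]
    · have hAB := P.antidiag hcom hwit (X₁ ⊗ X₂)
      have hab := P.antidiag hcom hwit X₁
      calc (φ (P.S.obj X₁) X₂ ≫ P.S.map (φ X₁ X₂) ≫ τ (X₁ ⊗ X₂)) ≫ P.π1.app (X₁ ⊗ X₂)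
          = (φ (P.S.obj X₁) X₂ ≫ P.S.map (φ X₁ X₂)) ≫ τ (X₁ ⊗ X₂) ≫ P.π1.app (X₁ ⊗ X₂) := by
            simp only [Category.assoc]
        _ = (φ (P.S.obj X₁) X₂ ≫ P.S.map (φ X₁ X₂)) ≫
              P.sum (P.π1.app (P.S.obj (X₁ ⊗ X₂)) ≫ P.π0.app (X₁ ⊗ X₂))
                (P.π0.app (P.S.obj (X₁ ⊗ X₂)) ≫ P.π1.app (X₁ ⊗ X₂)) := by rw [hτ1]
        _ = P.sum ((φ (P.S.obj X₁) X₂ ≫ P.S.map (φ X₁ X₂)) ≫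
                (P.π1.app (P.S.obj (X₁ ⊗ X₂)) ≫ P.π0.app (X₁ ⊗ X₂)))
              ((φ (P.S.obj X₁) X₂ ≫ P.S.map (φ X₁ X₂)) ≫
                (P.π0.app (P.S.obj (X₁ ⊗ X₂)) ≫ P.π1.app (X₁ ⊗ X₂))) := by
            rw [(P.sum_pre (φ (P.S.obj X₁) X₂ ≫ P.S.map (φ X₁ X₂)) hAB).2]
        _ = P.sum ((P.π1.app (P.S.obj X₁) ≫ P.π0.app X₁) ⊗ₘ 𝟙 X₂)
              ((P.π0.app (P.S.obj X₁) ≫ P.π1.app X₁) ⊗ₘ 𝟙 X₂) := by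
            congr 1
            · rw [← Category.assoc, key1, Category.assoc, hφ0, tensorHom_comp_tensorHom, Category.comp_id]
            · rw [← Category.assoc, key0, Category.assoc, hφ1, tensorHom_comp_tensorHom, Category.comp_id]
        _ = (P.sum (P.π1.app (P.S.obj X₁) ≫ P.π0.app X₁)
              (P.π0.app (P.S.obj X₁) ≫ P.π1.app X₁) ⊗ₘ 𝟙 X₂) := by
            rw [(htens _ _ (𝟙 X₂) hab).2]
        _ = ((τ X₁ ≫ P.π1.app X₁) ⊗ₘ 𝟙 X₂) := by rw [hτ1]
        _ = (τ X₁ ⊗ₘ 𝟙 X₂) ≫ (P.π1.app X₁ ⊗ₘ 𝟙 X₂) := by rw [comp_tensor_id]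
        _ = ((τ X₁ ⊗ₘ 𝟙 X₂) ≫ φ X₁ X₂) ≫ P.π1.app (X₁ ⊗ X₂) := by rw [Category.assoc, hφ1]
  -- (3)
  have part3 : ∀ X₁ X₂ : C,
      φ X₁ (P.S.obj X₂) ≫ P.S.map (φ₂ X₁ X₂) ≫ c (X₁ ⊗ X₂) =
        φ₂ (P.S.obj X₁) X₂ ≫ P.S.map (φ X₁ X₂) := by
    intro X₁ X₂
    have L0 : φ X₁ (P.S.obj X₂) ≫ P.S.map (φ₂ X₁ X₂) ≫ P.π0.app (P.S.obj (X₁ ⊗ X₂)) =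
        (P.π0.app X₁ ⊗ₘ 𝟙 (P.S.obj X₂)) ≫ φ₂ X₁ X₂ := by
      rw [P.nat0 (φ₂ X₁ X₂), ← Category.assoc, hφ0]
    have L1 : φ X₁ (P.S.obj X₂) ≫ P.S.map (φ₂ X₁ X₂) ≫ P.π1.app (P.S.obj (X₁ ⊗ X₂)) =
        (P.π1.app X₁ ⊗ₘ 𝟙 (P.S.obj X₂)) ≫ φ₂ X₁ X₂ := by
      rw [P.nat1 (φ₂ X₁ X₂), ← Category.assoc, hφ1]
    have R0 : φ₂ (P.S.obj X₁) X₂ ≫ P.S.map (φ X₁ X₂) ≫ P.π0.app (P.S.obj (X₁ ⊗ X₂)) =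
        (𝟙 (P.S.obj X₁) ⊗ₘ P.π0.app X₂) ≫ φ X₁ X₂ := by
      rw [P.nat0 (φ X₁ X₂), ← Category.assoc, hφ₂0]
    have R1 : φ₂ (P.S.obj X₁) X₂ ≫ P.S.map (φ X₁ X₂) ≫ P.π1.app (P.S.obj (X₁ ⊗ X₂)) =
        (𝟙 (P.S.obj X₁) ⊗ₘ P.π1.app X₂) ≫ φ X₁ X₂ := by
      rw [P.nat1 (φ X₁ X₂), ← Category.assoc, hφ₂1]
    apply P.jointly_monic
    · apply P.jointly_monic
      · -- outer π0, inner π0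
        calc ((φ X₁ (P.S.obj X₂) ≫ P.S.map (φ₂ X₁ X₂) ≫ c (X₁ ⊗ X₂)) ≫
                P.π0.app (P.S.obj (X₁ ⊗ X₂))) ≫ P.π0.app (X₁ ⊗ X₂)
            = (φ X₁ (P.S.obj X₂) ≫ P.S.map (φ₂ X₁ X₂)) ≫ c (X₁ ⊗ X₂) ≫
                P.π0.app (P.S.obj (X₁ ⊗ X₂)) ≫ P.π0.app (X₁ ⊗ X₂) := by
              simp only [Category.assoc]
          _ = (φ X₁ (P.S.obj X₂) ≫ P.S.map (φ₂ X₁ X₂)) ≫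
                P.π0.app (P.S.obj (X₁ ⊗ X₂)) ≫ P.π0.app (X₁ ⊗ X₂) := by rw [hc00]
          _ = ((P.π0.app X₁ ⊗ₘ 𝟙 (P.S.obj X₂)) ≫ φ₂ X₁ X₂) ≫ P.π0.app (X₁ ⊗ X₂) := by
              rw [← Category.assoc, Category.assoc (φ X₁ (P.S.obj X₂)), L0]
          _ = (P.π0.app X₁ ⊗ₘ 𝟙 (P.S.obj X₂)) ≫ (𝟙 X₁ ⊗ₘ P.π0.app X₂) := by
              rw [Category.assoc, hφ₂0]
          _ = (P.π0.app X₁ ⊗ₘ P.π0.app X₂) := by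
              simp only [Functor.id_obj]; rw [tensor_id_comp_id_tensor]
          _ = (𝟙 (P.S.obj X₁) ⊗ₘ P.π0.app X₂) ≫ (P.π0.app X₁ ⊗ₘ 𝟙 X₂) := by
              simp only [Functor.id_obj]; rw [id_tensor_comp_tensor_id]
          _ = ((𝟙 (P.S.obj X₁) ⊗ₘ P.π0.app X₂) ≫ φ X₁ X₂) ≫ P.π0.app (X₁ ⊗ X₂) := by
              rw [Category.assoc, hφ0]
          _ = ((φ₂ (P.S.obj X₁) X₂ ≫ P.S.map (φ X₁ X₂)) ≫
                P.π0.app (P.S.obj (X₁ ⊗ X₂))) ≫ P.π0.app (X₁ ⊗ X₂) := by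
              rw [Category.assoc (φ₂ (P.S.obj X₁) X₂), R0]
      · -- outer π0, inner π1
        calc ((φ X₁ (P.S.obj X₂) ≫ P.S.map (φ₂ X₁ X₂) ≫ c (X₁ ⊗ X₂)) ≫
                P.π0.app (P.S.obj (X₁ ⊗ X₂))) ≫ P.π1.app (X₁ ⊗ X₂)
            = (φ X₁ (P.S.obj X₂) ≫ P.S.map (φ₂ X₁ X₂)) ≫ c (X₁ ⊗ X₂) ≫
                P.π0.app (P.S.obj (X₁ ⊗ X₂)) ≫ P.π1.app (X₁ ⊗ X₂) := by
              simp only [Category.assoc]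
          _ = (φ X₁ (P.S.obj X₂) ≫ P.S.map (φ₂ X₁ X₂)) ≫
                P.π1.app (P.S.obj (X₁ ⊗ X₂)) ≫ P.π0.app (X₁ ⊗ X₂) := by rw [hc10]
          _ = ((P.π1.app X₁ ⊗ₘ 𝟙 (P.S.obj X₂)) ≫ φ₂ X₁ X₂) ≫ P.π0.app (X₁ ⊗ X₂) := by
              rw [← Category.assoc, Category.assoc (φ X₁ (P.S.obj X₂)), L1]
          _ = (P.π1.app X₁ ⊗ₘ 𝟙 (P.S.obj X₂)) ≫ (𝟙 X₁ ⊗ₘ P.π0.app X₂) := by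
              rw [Category.assoc, hφ₂0]
          _ = (P.π1.app X₁ ⊗ₘ P.π0.app X₂) := by
              simp only [Functor.id_obj]; rw [tensor_id_comp_id_tensor]
          _ = (𝟙 (P.S.obj X₁) ⊗ₘ P.π0.app X₂) ≫ (P.π1.app X₁ ⊗ₘ 𝟙 X₂) := by
              simp only [Functor.id_obj]; rw [id_tensor_comp_tensor_id]
          _ = ((𝟙 (P.S.obj X₁) ⊗ₘ P.π0.app X₂) ≫ φ X₁ X₂) ≫ P.π1.app (X₁ ⊗ X₂) := by
              rw [Category.assoc, hφ1]
          _ = ((φ₂ (P.S.obj X₁) X₂ ≫ P.S.map (φ X₁ X₂)) ≫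
                P.π0.app (P.S.obj (X₁ ⊗ X₂))) ≫ P.π1.app (X₁ ⊗ X₂) := by
              rw [Category.assoc (φ₂ (P.S.obj X₁) X₂), R0]
    · apply P.jointly_monic
      · -- outer π1, inner π0
        calc ((φ X₁ (P.S.obj X₂) ≫ P.S.map (φ₂ X₁ X₂) ≫ c (X₁ ⊗ X₂)) ≫
                P.π1.app (P.S.obj (X₁ ⊗ X₂))) ≫ P.π0.app (X₁ ⊗ X₂)
            = (φ X₁ (P.S.obj X₂) ≫ P.S.map (φ₂ X₁ X₂)) ≫ c (X₁ ⊗ X₂) ≫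
                P.π1.app (P.S.obj (X₁ ⊗ X₂)) ≫ P.π0.app (X₁ ⊗ X₂) := by
              simp only [Category.assoc]
          _ = (φ X₁ (P.S.obj X₂) ≫ P.S.map (φ₂ X₁ X₂)) ≫
                P.π0.app (P.S.obj (X₁ ⊗ X₂)) ≫ P.π1.app (X₁ ⊗ X₂) := by rw [hc01]
          _ = ((P.π0.app X₁ ⊗ₘ 𝟙 (P.S.obj X₂)) ≫ φ₂ X₁ X₂) ≫ P.π1.app (X₁ ⊗ X₂) := by
              rw [← Category.assoc, Category.assoc (φ X₁ (P.S.obj X₂)), L0]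
          _ = (P.π0.app X₁ ⊗ₘ 𝟙 (P.S.obj X₂)) ≫ (𝟙 X₁ ⊗ₘ P.π1.app X₂) := by
              rw [Category.assoc, hφ₂1]
          _ = (P.π0.app X₁ ⊗ₘ P.π1.app X₂) := by
              simp only [Functor.id_obj]; rw [tensor_id_comp_id_tensor]
          _ = (𝟙 (P.S.obj X₁) ⊗ₘ P.π1.app X₂) ≫ (P.π0.app X₁ ⊗ₘ 𝟙 X₂) := by
              simp only [Functor.id_obj]; rw [id_tensor_comp_tensor_id]
          _ = ((𝟙 (P.S.obj X₁) ⊗ₘ P.π1.app X₂) ≫ φ X₁ X₂) ≫ P.π0.app (X₁ ⊗ X₂) := by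
              rw [Category.assoc, hφ0]
          _ = ((φ₂ (P.S.obj X₁) X₂ ≫ P.S.map (φ X₁ X₂)) ≫
                P.π1.app (P.S.obj (X₁ ⊗ X₂))) ≫ P.π0.app (X₁ ⊗ X₂) := by
              rw [Category.assoc (φ₂ (P.S.obj X₁) X₂), R1]
      · -- outer π1, inner π1
        calc ((φ X₁ (P.S.obj X₂) ≫ P.S.map (φ₂ X₁ X₂) ≫ c (X₁ ⊗ X₂)) ≫
                P.π1.app (P.S.obj (X₁ ⊗ X₂))) ≫ P.π1.app (X₁ ⊗ X₂)
            = (φ X₁ (P.S.obj X₂) ≫ P.S.map (φ₂ X₁ X₂)) ≫ c (X₁ ⊗ X₂) ≫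
                P.π1.app (P.S.obj (X₁ ⊗ X₂)) ≫ P.π1.app (X₁ ⊗ X₂) := by
              simp only [Category.assoc]
          _ = (φ X₁ (P.S.obj X₂) ≫ P.S.map (φ₂ X₁ X₂)) ≫
                P.π1.app (P.S.obj (X₁ ⊗ X₂)) ≫ P.π1.app (X₁ ⊗ X₂) := by rw [hc11]
          _ = ((P.π1.app X₁ ⊗ₘ 𝟙 (P.S.obj X₂)) ≫ φ₂ X₁ X₂) ≫ P.π1.app (X₁ ⊗ X₂) := by
              rw [← Category.assoc, Category.assoc (φ X₁ (P.S.obj X₂)), L1]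
          _ = (P.π1.app X₁ ⊗ₘ 𝟙 (P.S.obj X₂)) ≫ (𝟙 X₁ ⊗ₘ P.π1.app X₂) := by
              rw [Category.assoc, hφ₂1]
          _ = (P.π1.app X₁ ⊗ₘ P.π1.app X₂) := by
              simp only [Functor.id_obj]; rw [tensor_id_comp_id_tensor]
          _ = (𝟙 (P.S.obj X₁) ⊗ₘ P.π1.app X₂) ≫ (P.π1.app X₁ ⊗ₘ 𝟙 X₂) := by
              simp only [Functor.id_obj]; rw [id_tensor_comp_tensor_id]
          _ = ((𝟙 (P.S.obj X₁) ⊗ₘ P.π1.app X₂) ≫ φ X₁ X₂) ≫ P.π1.app (X₁ ⊗ X₂) := by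
              rw [Category.assoc, hφ1]
          _ = ((φ₂ (P.S.obj X₁) X₂ ≫ P.S.map (φ X₁ X₂)) ≫
                P.π1.app (P.S.obj (X₁ ⊗ X₂))) ≫ P.π1.app (X₁ ⊗ X₂) := by
              rw [Category.assoc (φ₂ (P.S.obj X₁) X₂), R1]
  -- `c` absorbs into `τ`
  have hcτ : ∀ Z : C, c Z ≫ τ Z = τ Z := by
    intro Z
    apply P.jointly_monic
    · rw [Category.assoc, hτ0, hc00]
    · rw [Category.assoc, hτ1,
        ← (P.sum_pre (c Z) (P.antidiag hcom hwit Z)).2, hc01, hc10]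
      exact (P.summable_comm hcom (P.antidiag hcom hwit Z)).2
  -- (4)
  have part4 : ∀ X₁ X₂ : C,
      φ₂ (P.S.obj X₁) X₂ ≫ P.S.map (φ X₁ X₂) ≫ τ (X₁ ⊗ X₂) =
        φ X₁ (P.S.obj X₂) ≫ P.S.map (φ₂ X₁ X₂) ≫ τ (X₁ ⊗ X₂) := by
    intro X₁ X₂
    rw [← Category.assoc, ← part3 X₁ X₂, Category.assoc, Category.assoc, hcτ]
  exact ⟨part1, part2, part3, part4⟩
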